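/- Fix n ≥ 1 and let G be the disjoint union of n copies of the octahedron graph K_{2,2,2}; concretely, G is the graph on vertex set Fin n × Fin 6 in which (i, u) and (j, v) are adjacent if and only if i = j and u, v are adjacent in the octahedron (where the octahedron on Fin 6 has vertex pairs {0,1}, {2,3}, {4,5} and two vertices are adjacent iff they lie in different pairs). Then every subset S of the vertex set of G such that the subgraph of G induced on S is a triangle-forest satisfies |S| ≤ 3n, i.e., every induced triangle-forest of G contains at most half of the vertices of G. -/

import Mathlib

/-- A graph is a *triangle-forest* if every cycle in it has length exactly three
(equivalently, it has no cycles of length at least four). -/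
def SimpleGraph.IsTriangleForest {V : Type*} (G : SimpleGraph V) : Prop :=
  ∀ (v : V) (c : G.Walk v v), c.IsCycle → c.length = 3

/-- The octahedron graph `K_{2,2,2}` on six vertices: the pairs are `{0,1}`, `{2,3}`, `{4,5}`,
and two vertices are adjacent iff they lie in different pairs. -/
def octahedron : SimpleGraph (Fin 6) :=
  SimpleGraph.fromRel (fun u v => u.val / 2 ≠ v.val / 2)

/-- The disjoint union of `n` copies of the octahedron: `(i, u)` and `(j, v)` are adjacent
iff `i = j` and `u`, `v` are adjacent in the octahedron. -/
def nOctahedra (n : ℕ) : SimpleGraph (Fin n × Fin 6) where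
  Adj x y := x.1 = y.1 ∧ octahedron.Adj x.2 y.2
  symm := by
    constructor
    rintro x y ⟨h1, h2⟩
    exact ⟨h1.symm, h2.symm⟩
  loopless := by
    constructor
    rintro x ⟨-, h2⟩
    exact octahedron.ne_of_adj h2 rfl

instance : DecidableRel octahedron.Adj := fun a b =>
  inferInstanceAs (Decidable (a ≠ b ∧ (a.val / 2 ≠ b.val / 2 ∨ b.val / 2 ≠ a.val / 2)))

set_option maxRecDepth 100000 in
lemma octa_four (s : Finset (Fin 6)) (hs : 4 ≤ s.card) :
    ∃ a ∈ s, ∃ b ∈ s, ∃ c ∈ s, ∃ d ∈ s,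
      octahedron.Adj a b ∧ octahedron.Adj b c ∧ octahedron.Adj c d ∧ octahedron.Adj d a ∧
      a ≠ b ∧ a ≠ c ∧ a ≠ d ∧ b ≠ c ∧ b ≠ d ∧ c ≠ d := by
  revert hs; revert s; decide

/-- Every induced triangle-forest of a disjoint union of `n ≥ 1` octahedra has at most `3n`
vertices, i.e., at most half of the `6n` vertices. -/
theorem nOctahedra_induced_triangleForest_card_le (n : ℕ) (hn : 1 ≤ n)
    (S : Finset (Fin n × Fin 6))
    (h : ((nOctahedra n).induce (S : Set (Fin n × Fin 6))).IsTriangleForest) :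
    S.card ≤ 3 * n := by
  have key : ∀ i : Fin n, (S.filter fun p => p.1 = i).card ≤ 3 := by
    intro i
    by_contra hc
    push_neg at hc
    have h4 : 4 ≤ ((S.filter fun p => p.1 = i).image Prod.snd).card := by
      rw [Finset.card_image_of_injOn]
      · exact hc
      · intro x hx y hy hxy
        simp only [Finset.mem_coe, Finset.mem_filter] at hx hy
        exact Prod.ext (hx.2.trans hy.2.symm) hxy
    obtain ⟨a, ha, b, hb, c, hcm, d, hd, hab, hbc, hcd, hda, nab, nac, nad, nbc, nbd, ncd⟩ :=
      octa_four _ h4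
    simp only [Finset.mem_image, Finset.mem_filter] at ha hb hcm hd
    obtain ⟨pa, ⟨hpaS, hpai⟩, hpa⟩ := ha
    obtain ⟨pb, ⟨hpbS, hpbi⟩, hpb⟩ := hb
    obtain ⟨pc, ⟨hpcS, hpci⟩, hpc⟩ := hcm
    obtain ⟨pd, ⟨hpdS, hpdi⟩, hpd⟩ := hd
    have hpa' : pa = (i, a) := Prod.ext hpai hpa
    have hpb' : pb = (i, b) := Prod.ext hpbi hpb
    have hpc' : pc = (i, c) := Prod.ext hpci hpc
    have hpd' : pd = (i, d) := Prod.ext hpdi hpd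
    subst hpa' hpb' hpc' hpd'
    have haS : ((i, a) : Fin n × Fin 6) ∈ (S : Set (Fin n × Fin 6)) := hpaS
    have hbS : ((i, b) : Fin n × Fin 6) ∈ (S : Set (Fin n × Fin 6)) := hpbS
    have hcS : ((i, c) : Fin n × Fin 6) ∈ (S : Set (Fin n × Fin 6)) := hpcS
    have hdS : ((i, d) : Fin n × Fin 6) ∈ (S : Set (Fin n × Fin 6)) := hpdS
    set G := (nOctahedra n).induce (S : Set (Fin n × Fin 6))
    let A : (S : Set (Fin n × Fin 6)) := ⟨(i, a), haS⟩
    let B : (S : Set (Fin n × Fin 6)) := ⟨(i, b), hbS⟩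
    let C : (S : Set (Fin n × Fin 6)) := ⟨(i, c), hcS⟩
    let D : (S : Set (Fin n × Fin 6)) := ⟨(i, d), hdS⟩
    have eAB : G.Adj A B := ⟨rfl, hab⟩
    have eBC : G.Adj B C := ⟨rfl, hbc⟩
    have eCD : G.Adj C D := ⟨rfl, hcd⟩
    have eDA : G.Adj D A := ⟨rfl, hda⟩
    let w : G.Walk A A :=
      SimpleGraph.Walk.cons eAB (SimpleGraph.Walk.cons eBC
        (SimpleGraph.Walk.cons eCD (SimpleGraph.Walk.cons eDA SimpleGraph.Walk.nil)))
    have hNE : A ≠ B ∧ A ≠ C ∧ A ≠ D ∧ B ≠ C ∧ B ≠ D ∧ C ≠ D := by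
      refine ⟨?_, ?_, ?_, ?_, ?_, ?_⟩ <;>
        · intro hcontra
          apply_fun (fun x => x.val.2) at hcontra
          simp_all [A, B, C, D]
    obtain ⟨nAB, nAC, nAD, nBC, nBD, nCD⟩ := hNE
    have nBA := nAB.symm; have nCA := nAC.symm; have nDA := nAD.symm
    have nCB := nBC.symm; have nDB := nBD.symm; have nDC := nCD.symm
    have hcyc : w.IsCycle := by
      rw [SimpleGraph.Walk.isCycle_def, SimpleGraph.Walk.isTrail_def]
      refine ⟨?_, by simp [w], ?_⟩
      · simp only [w, SimpleGraph.Walk.edges_cons, SimpleGraph.Walk.edges_nil,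
          List.nodup_cons, List.mem_cons, List.not_mem_nil,
          List.nodup_nil, Sym2.eq_iff]
        tauto
      · simp only [w, SimpleGraph.Walk.support_cons, SimpleGraph.Walk.support_nil,
          List.tail_cons, List.nodup_cons, List.mem_cons, List.not_mem_nil,
          List.nodup_nil]
        tauto
    have := h A w hcyc
    simp [w] at this
  calc S.card = ∑ i : Fin n, (S.filter fun p => p.1 = i).card := by
        rw [← Finset.card_eq_sum_card_fiberwise (f := Prod.fst) (t := Finset.univ)]
        intro x _; exact Finset.mem_univ _
    _ ≤ ∑ _i : Fin n, 3 := Finset.sum_le_sum fun i _ => key i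
    _ = 3 * n := by simp [mul_comm]
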